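/- arXiv:math/0111178 — 2 statements merged into one kernel-verified Lean document; each statement's English description precedes it below -/
import Mathlib

section
/- Liouville's theorem on Diophantine approximation: If ω is an irrational root of a polynomial P with integer coefficients of degree n ≥ 2, and k with 0 ≤ k ≤ n-2 is such that P(ω) = P'(ω) = ⋯ = P^{(k)}(ω) = 0 but P^{(k+1)}(ω) ≠ 0, then there exists C > 0 such that |ω - p/q| ≥ C/|q|^{n/(k+1)} for all relatively prime integers p, q with q ≠ 0. In particular, quadratic irrationals ω satisfy |ω - p/q| ≥ C/q² for some C > 0. -/
open Polynomial Metric Set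

/-- Liouville's theorem on Diophantine approximation: if `ω` is an irrational root
of an integer polynomial `P` of degree `n ≥ 2`, with `P(ω) = ⋯ = P^{(k)}(ω) = 0`
and `P^{(k+1)}(ω) ≠ 0` for some `0 ≤ k ≤ n-2`, then there is `C > 0` with
`|ω - p/q| ≥ C/|q|^{n/(k+1)}` for all coprime integers `p, q`, `q ≠ 0`.
In particular (case `n = 2`, `k = 0`), quadratic irrationals satisfy
`|ω - p/q| ≥ C/q²`. -/
theorem liouville_diophantine (P : Polynomial ℤ) (ω : ℝ)
    (hdeg : 2 ≤ P.natDegree) (hω : Irrational ω)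
    (k : ℕ) (hk : k ≤ P.natDegree - 2)
    (hvanish : ∀ j ≤ k, Polynomial.aeval ω (Polynomial.derivative^[j] P) = 0)
    (hne : Polynomial.aeval ω (Polynomial.derivative^[k + 1] P) ≠ 0) :
    (∃ C : ℝ, 0 < C ∧ ∀ p q : ℤ, q ≠ 0 → Int.gcd p q = 1 →
      C / |(q : ℝ)| ^ ((P.natDegree : ℝ) / ((k : ℝ) + 1)) ≤ |ω - (p : ℝ) / (q : ℝ)|) ∧
    (P.natDegree = 2 →
      ∃ C : ℝ, 0 < C ∧ ∀ p q : ℤ, q ≠ 0 → Int.gcd p q = 1 →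
        C / (q : ℝ) ^ 2 ≤ |ω - (p : ℝ) / (q : ℝ)|) := by
  classical
  set n := P.natDegree with hn
  set m := k + 1 with hm
  set α : ℝ := (n : ℝ) / ((k : ℝ) + 1) with hα
  have hmℝ : ((k : ℝ) + 1) = (m : ℝ) := by push_cast [hm]; ring
  have hmpos : (0 : ℝ) < (m : ℝ) := by positivity
  have hαpos : 0 < α := by
    rw [hα]
    apply div_pos
    · exact_mod_cast lt_of_lt_of_le (by norm_num) hdeg
    · positivity
  set Q : Polynomial ℝ := P.map (algebraMap ℤ ℝ) with hQdef
  have haev : ∀ R : Polynomial ℤ, Polynomial.aeval ω R = (R.map (algebraMap ℤ ℝ)).eval ω := by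
    intro R; rw [Polynomial.aeval_def, Polynomial.eval_map]
  have hP0 : P ≠ 0 := by
    intro h
    have := hdeg
    rw [hn, h, Polynomial.natDegree_zero] at this
    omega
  have hQ0 : Q ≠ 0 := by
    rw [hQdef]
    exact (Polynomial.map_ne_zero_iff (algebraMap ℤ ℝ).injective_int).mpr hP0
  -- ω has root multiplicity at least m = k+1 in Q
  have hmult : m ≤ Q.rootMultiplicity ω := by
    have := lt_rootMultiplicity_of_isRoot_iterate_derivative_of_mem_nonZeroDivisors'
      (p := Q) (t := ω) (n := k) hQ0 ?_ ?_
    · omega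
    · intro j hj
      rw [IsRoot, hQdef, Polynomial.iterate_derivative_map, ← haev]
      exact hvanish j hj
    · intro j _ hj0
      exact mem_nonZeroDivisors_of_ne_zero (by exact_mod_cast hj0)
  obtain ⟨g, hg⟩ : (X - C ω) ^ m ∣ Q :=
    dvd_trans (pow_dvd_pow _ hmult) (Q.pow_rootMultiplicity_dvd ω)
  -- root separation
  have hωroot : ω ∈ (Q.roots.toFinset : Set ℝ) := by
    refine Finset.mem_coe.mpr (Multiset.mem_toFinset.mpr ((mem_roots hQ0).mpr ?_))
    rw [IsRoot, hQdef, ← haev]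
    exact hvanish 0 (Nat.zero_le k)
  obtain ⟨ζ, z0, U⟩ : ∃ ζ > 0, closedBall ω ζ ∩ (Q.roots.toFinset : Set ℝ) = {ω} :=
    @exists_closedBall_inter_eq_singleton_of_discrete _ _ _
      (Set.Finite.isDiscrete (Finset.finite_toSet _)) _ hωroot
  -- bound on g near ω
  obtain ⟨xm, hxm, hMx⟩ : ∃ xm ∈ Icc (ω - 1) (ω + 1),
      IsMaxOn (fun y => |g.eval y|) (Icc (ω - 1) (ω + 1)) xm :=
    IsCompact.exists_isMaxOn isCompact_Icc
      ⟨ω, by constructor <;> linarith⟩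
      (continuous_abs.comp (Polynomial.continuous g)).continuousOn
  set M : ℝ := max |g.eval xm| 1 with hMdef
  have hM1 : (1 : ℝ) ≤ M := le_max_right _ _
  have hMpos : (0 : ℝ) < M := lt_of_lt_of_le one_pos hM1
  set c : ℝ := (1 / M) ^ ((1 : ℝ) / (m : ℝ)) with hcdef
  have hcpos : 0 < c := Real.rpow_pos_of_pos (by positivity) _
  have hcm : c ^ m = 1 / M := by
    rw [hcdef, ← Real.rpow_natCast ((1 / M) ^ ((1 : ℝ) / (m : ℝ))) m,
      ← Real.rpow_mul (by positivity), one_div_mul_cancel (ne_of_gt hmpos), Real.rpow_one]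
  set Cc : ℝ := min (min ζ 1) c with hCdef
  have hCpos : 0 < Cc := lt_min (lt_min z0 one_pos) hcpos
  have main : ∀ p q : ℤ, q ≠ 0 → Int.gcd p q = 1 →
      Cc / |(q : ℝ)| ^ α ≤ |ω - (p : ℝ) / (q : ℝ)| := by
    intro p q hq _
    have habs1 : (1 : ℝ) ≤ |(q : ℝ)| := by
      rw [← Int.cast_abs]
      exact_mod_cast Int.one_le_abs hq
    have habspos : (0 : ℝ) < |(q : ℝ)| := lt_of_lt_of_le one_pos habs1
    have hpow1 : (1 : ℝ) ≤ |(q : ℝ)| ^ α := Real.one_le_rpow habs1 (le_of_lt hαpos)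
    have hpowpos : (0 : ℝ) < |(q : ℝ)| ^ α := lt_of_lt_of_le one_pos hpow1
    have hCle : Cc / |(q : ℝ)| ^ α ≤ Cc := by
      rw [div_le_iff₀ hpowpos]
      exact le_mul_of_one_le_right (le_of_lt hCpos) hpow1
    have hωne : ω ≠ (p : ℝ) / (q : ℝ) := (irrational_iff_ne_rational ω).mp hω p q hq
    by_cases h0 : Q.eval ((p : ℝ) / (q : ℝ)) = 0
    · -- p/q is a rational root of Q, so it is at distance > ζ from ω
      have hmem : (p : ℝ) / (q : ℝ) ∈ (Q.roots.toFinset : Set ℝ) :=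
        Finset.mem_coe.mpr (Multiset.mem_toFinset.mpr ((mem_roots hQ0).mpr h0))
      have hnotball : (p : ℝ) / (q : ℝ) ∉ closedBall ω ζ := by
        intro hin
        exact hωne (((U ▸ mem_inter hin hmem : ((p:ℝ)/(q:ℝ)) ∈ ({ω} : Set ℝ))).symm)
      have : ζ < |ω - (p : ℝ) / (q : ℝ)| := by
        rw [mem_closedBall, Real.dist_eq, abs_sub_comm] at hnotball
        linarith [not_le.mp hnotball]
      calc Cc / |(q : ℝ)| ^ α ≤ Cc := hCle
        _ ≤ ζ := le_trans (min_le_left _ _) (min_le_left _ _)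
        _ ≤ _ := le_of_lt this
    · by_cases hfar : 1 ≤ |ω - (p : ℝ) / (q : ℝ)|
      · calc Cc / |(q : ℝ)| ^ α ≤ Cc := hCle
          _ ≤ 1 := le_trans (min_le_left _ _) (min_le_right _ _)
          _ ≤ _ := hfar
      · -- main case
        push_neg at hfar
        set D := |ω - (p : ℝ) / (q : ℝ)| with hD
        have hDpos : 0 < D := abs_pos.mpr (sub_ne_zero.mpr hωne)
        -- replace p, q by a, b with b > 0
        set a : ℤ := if 0 < q then p else -p with ha
        set b : ℤ := |q| with hb
        have hbpos : 0 < b := abs_pos.mpr hq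
        have hab : ((a : ℝ) / (b : ℝ)) = (p : ℝ) / (q : ℝ) := by
          rcases lt_or_gt_of_ne hq with hneg | hpos
          · rw [ha, hb, if_neg (by omega), abs_of_neg hneg]
            push_cast
            rw [neg_div_neg_eq]
          · rw [ha, hb, if_pos hpos, abs_of_pos hpos]
        have hbcast : ((b : ℤ) : ℝ) = |(q : ℝ)| := by
          rw [hb]; push_cast [Int.cast_abs]; ring_nf
        have key : (1 : ℝ) ≤ (b : ℝ) ^ n * |Q.eval ((a : ℝ) / (b : ℝ))| := by
          refine one_le_pow_mul_abs_eval_div hbpos ?_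
          rw [← hQdef, hab]
          exact h0
        -- factor Q
        have hfac : |Q.eval ((p : ℝ) / (q : ℝ))| = D ^ m * |g.eval ((p : ℝ) / (q : ℝ))| := by
          rw [hg, eval_mul, eval_pow, eval_sub, eval_X, eval_C, abs_mul, abs_pow, hD,
            abs_sub_comm]
        have hinIcc : (p : ℝ) / (q : ℝ) ∈ Icc (ω - 1) (ω + 1) := by
          have := abs_sub_lt_iff.mp hfar
          constructor <;> linarith [this.1, this.2]
        have hgM : |g.eval ((p : ℝ) / (q : ℝ))| ≤ M :=
          le_trans (hMx hinIcc) (le_max_left _ _)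
        have key2 : (1 : ℝ) ≤ |(q : ℝ)| ^ n * (D ^ m * M) := by
          calc (1 : ℝ) ≤ (b : ℝ) ^ n * |Q.eval ((a : ℝ) / (b : ℝ))| := key
            _ = |(q : ℝ)| ^ n * (D ^ m * |g.eval ((p : ℝ) / (q : ℝ))|) := by
                rw [hab, hfac, hbcast]
            _ ≤ |(q : ℝ)| ^ n * (D ^ m * M) := by
                apply mul_le_mul_of_nonneg_left _ (by positivity)
                exact mul_le_mul_of_nonneg_left hgM (by positivity)
        -- conclude by taking m-th roots
        have hqα : (|(q : ℝ)| ^ α) ^ m = |(q : ℝ)| ^ n := by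
          rw [← Real.rpow_natCast (|(q : ℝ)| ^ α) m, ← Real.rpow_mul (abs_nonneg _),
            hα, hmℝ, div_mul_cancel₀ _ (ne_of_gt hmpos), Real.rpow_natCast]
        have hstep : c / |(q : ℝ)| ^ α ≤ D := by
          apply le_of_pow_le_pow_left₀ (Nat.succ_ne_zero k) (le_of_lt hDpos)
          rw [div_pow, hcm, hqα, div_div, div_le_iff₀ (by positivity)]
          show (1 : ℝ) ≤ D ^ m * (M * |(q : ℝ)| ^ n)
          calc (1 : ℝ) ≤ |(q : ℝ)| ^ n * (D ^ m * M) := key2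
            _ = D ^ m * (M * |(q : ℝ)| ^ n) := by ring
        calc Cc / |(q : ℝ)| ^ α ≤ c / |(q : ℝ)| ^ α := by
              gcongr
              exact min_le_right _ _
          _ ≤ D := hstep
  refine ⟨⟨Cc, hCpos, main⟩, fun h2 => ⟨Cc, hCpos, fun p q hq hco => ?_⟩⟩
  have hk0 : k = 0 := by omega
  have := main p q hq hco
  have hα2 : α = 2 := by
    have hn2 : n = 2 := h2
    rw [hα, hk0, hn2]; norm_num
  rw [hα2] at this
  calc Cc / (q : ℝ) ^ 2 = Cc / |(q : ℝ)| ^ (2 : ℝ) := by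
        rw [Real.rpow_two, sq_abs]
    _ ≤ _ := this
end

section
/- Let h: ℝ → ℂ be a C^r 2π-periodic function with zero average, with Fourier coefficients satisfying |h_k| ≤ ‖h‖_{C^r}/|k|^r. Let ω be Diophantine of type (C,ν) with r > ν + 1. Then the difference equation u(ψ + 2πω) - u(ψ) = h(ψ) has a continuous 2π-periodic zero-average solution u given by the Fourier series u(ψ) = Σ_{k≠0} h_k·e^{ikψ}/(e^{2πikω} - 1), and ‖u‖_{C⁰} ≤ ζ(r - ν)·‖h‖_{C^r}/(4C) · 2, i.e., the sup norm of u is bounded by (ζ(r-ν)/(2C))·‖h‖_{C^r}. -/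
open Complex

private lemma abs_exp_I_int_mul (k : ℤ) (ψ : ℝ) :
    ‖Complex.exp (Complex.I * k * ψ)‖ = 1 := by
  rw [Complex.norm_exp]; simp [Complex.mul_re]

private lemma exp_I_int_two_pi (k : ℤ) :
    Complex.exp (Complex.I * k * ((2 : ℂ) * Real.pi)) = 1 := by
  rw [show Complex.I * k * ((2:ℂ) * Real.pi) = k * (2 * Real.pi * Complex.I) by ring]
  exact Complex.exp_int_mul_two_pi_mul_I k

/-- Solution of the difference equation `u(ψ + 2πω) - u(ψ) = h(ψ)` for a `C^r`
`2π`-periodic zero-average function `h` with Fourier coefficients bounded by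
`‖h‖_{C^r}/|k|^r`, and `ω` Diophantine of type `(C,ν)` with `r > ν + 1`:
there is a continuous `2π`-periodic zero-average solution `u`, given by the
Fourier series `u(ψ) = Σ_{k≠0} h_k e^{ikψ}/(e^{2πikω} - 1)`, with
`‖u‖_{C⁰} ≤ (ζ(r-ν)/(2C)) ‖h‖_{C^r}`. -/
theorem difference_equation_solution (ω C ν : ℝ) (r : ℕ) (hC : 0 < C)
    (hν : 1 ≤ ν) (hrν : ν + 1 < (r : ℝ))
    (hden : ∀ k : ℤ, k ≠ 0 →
      4 * C / |(k : ℝ)| ^ ν ≤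
        ‖Complex.exp (2 * Real.pi * Complex.I * (k : ℂ) * (ω : ℂ)) - 1‖)
    (h : ℝ → ℂ) (a : ℤ → ℂ) (M : ℝ)
    (ha0 : a 0 = 0)
    (hrep : ∀ ψ : ℝ,
      HasSum (fun k : ℤ => a k * Complex.exp (Complex.I * (k : ℂ) * (ψ : ℂ))) (h ψ))
    (hbound : ∀ k : ℤ, k ≠ 0 → ‖a k‖ ≤ M / |(k : ℝ)| ^ (r : ℝ)) :
    ∃ u : ℝ → ℂ,
      Continuous u ∧
      (∀ ψ : ℝ, u (ψ + 2 * Real.pi) = u ψ) ∧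
      (∫ ψ in (0 : ℝ)..(2 * Real.pi), u ψ) = 0 ∧
      (∀ ψ : ℝ, u (ψ + 2 * Real.pi * ω) - u ψ = h ψ) ∧
      (∀ ψ : ℝ,
        HasSum (fun k : ℤ =>
          if k = 0 then 0 else
            a k * Complex.exp (Complex.I * (k : ℂ) * (ψ : ℂ)) /
              (Complex.exp (2 * Real.pi * Complex.I * (k : ℂ) * (ω : ℂ)) - 1))
          (u ψ)) ∧
      (∀ ψ : ℝ,
        ‖u ψ‖ ≤
          (∑' q : ℕ, ((q : ℝ) + 1) ^ (-(((r : ℝ)) - ν))) / (2 * C) * M) := by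
  have hπ : (0 : ℝ) < Real.pi := Real.pi_pos
  have hM : 0 ≤ M := by
    have h1 := hbound 1 one_ne_zero
    have h2 : (0 : ℝ) ≤ M / |((1:ℤ) : ℝ)| ^ (r : ℝ) :=
      le_trans (norm_nonneg _) h1
    simpa using h2
  set p : ℝ := (r : ℝ) - ν with hp
  have hp1 : 1 < p := by simp only [hp]; linarith
  have hSsum : Summable (fun q : ℕ => ((q : ℝ) + 1) ^ (-p)) := by
    have : Summable (fun n : ℕ => (n : ℝ) ^ (-p)) := Real.summable_nat_rpow.2 (by linarith)
    have := (summable_nat_add_iff 1).2 this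
    simpa using this
  set S : ℝ := ∑' q : ℕ, ((q : ℝ) + 1) ^ (-p) with hS
  set K : ℝ := M / (4 * C) with hK
  have hK0 : 0 ≤ K := by positivity
  set d : ℤ → ℂ := fun k => Complex.exp (2 * Real.pi * Complex.I * k * ω) - 1 with hd
  have hdne : ∀ k : ℤ, k ≠ 0 → d k ≠ 0 := by
    intro k hk hzero
    have h1 := hden k hk
    have hkpos : (0 : ℝ) < |(k : ℝ)| := by
      simp only [abs_pos]; exact_mod_cast hk
    have h0 : (0 : ℝ) < 4 * C / |(k : ℝ)| ^ ν := by positivity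
    have hzero' : Complex.exp (2 * Real.pi * Complex.I * k * ω) - 1 = 0 := hzero
    rw [hzero'] at h1
    simp at h1
    linarith
  set b : ℤ → ℂ := fun k => if k = 0 then 0 else a k / d k with hb
  set c : ℤ → ℝ := fun k => if k = 0 then 0 else K * |(k : ℝ)| ^ (-p) with hc
  have hc0 : ∀ k, 0 ≤ c k := by
    intro k
    simp only [hc]
    split
    · exact le_refl 0
    · positivity
  have hbc : ∀ k : ℤ, ‖b k‖ ≤ c k := by
    intro k
    by_cases hk : k = 0
    · simp [hb, hc, hk]
    · simp only [hb, hc, if_neg hk]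
      have hkpos : (0 : ℝ) < |(k : ℝ)| := by
        simp only [abs_pos]; exact_mod_cast hk
      have hdpos : (0 : ℝ) < 4 * C / |(k : ℝ)| ^ ν := by positivity
      have habs : ‖a k / d k‖ = ‖a k‖ / ‖d k‖ :=
        norm_div _ _
      rw [habs]
      have hdk : 4 * C / |(k : ℝ)| ^ ν ≤ ‖d k‖ := hden k hk
      have step1 : ‖a k‖ / ‖d k‖
          ≤ (M / |(k : ℝ)| ^ (r : ℝ)) / (4 * C / |(k : ℝ)| ^ ν) :=
        div_le_div₀ (by positivity) (hbound k hk) hdpos hdk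
      refine step1.trans (le_of_eq ?_)
      rw [show -p = ν - (r : ℝ) by rw [hp]; ring, Real.rpow_sub hkpos, hK,
        div_div_div_comm, div_div_eq_mul_div, mul_div_assoc]
  -- summability of c and its sum
  have hpos : HasSum (fun q : ℕ => K * (((q : ℝ)) + 1) ^ (-p)) (K * S) :=
    hSsum.hasSum.mul_left K
  have hnat1 : HasSum (fun n : ℕ => c ((n + 1 : ℕ) : ℤ)) (K * S) := by
    refine hpos.congr_fun fun n => ?_
    have hne : ((n + 1 : ℕ) : ℤ) ≠ 0 := by exact_mod_cast n.succ_ne_zero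
    simp only [hc, if_neg hne]
    push_cast
    rw [abs_of_pos (by positivity : (0:ℝ) < (n : ℝ) + 1)]
  have hnat : HasSum (fun n : ℕ => c (n : ℤ)) (K * S) := by
    have := (hasSum_nat_add_iff (f := fun n : ℕ => c (n : ℤ)) 1).mp
      (by convert hnat1 using 1)
    simpa [hc] using this
  have hneg : HasSum (fun n : ℕ => c (-((n : ℤ) + 1))) (K * S) := by
    refine hpos.congr_fun fun n => ?_
    have hne : -((n : ℤ) + 1) ≠ 0 := by omega
    simp only [hc, if_neg hne]
    push_cast
    rw [abs_neg, abs_of_pos (by positivity : (0:ℝ) < (n : ℝ) + 1)]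
  have hcsum : HasSum c (2 * K * S) := by
    have := HasSum.of_nat_of_neg_add_one hnat hneg
    convert this using 1; ring
  have hcsummable : Summable c := hcsum.summable
  -- the terms
  have habs_term : ∀ (k : ℤ) (ψ : ℝ),
      ‖b k * Complex.exp (Complex.I * k * ψ)‖ ≤ c k := by
    intro k ψ
    rw [norm_mul]
    have h1 : ‖Complex.exp (Complex.I * k * ψ)‖ = 1 := abs_exp_I_int_mul k ψ
    rw [h1, mul_one]
    exact hbc k
  have hsummable : ∀ ψ : ℝ,
      Summable (fun k : ℤ => b k * Complex.exp (Complex.I * k * ψ)) := fun ψ =>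
    Summable.of_norm_bounded hcsummable (fun k => habs_term k ψ)
  refine ⟨fun ψ => ∑' k : ℤ, b k * Complex.exp (Complex.I * k * ψ), ?_, ?_, ?_, ?_, ?_, ?_⟩
  · -- continuity
    refine continuous_tsum (fun k => ?_) hcsummable (fun k ψ => habs_term k ψ)
    exact continuous_const.mul (Complex.continuous_exp.comp
      (continuous_const.mul Complex.continuous_ofReal))
  · -- periodicity
    intro ψ
    refine tsum_congr fun k => ?_
    congr 1
    rw [show ((ψ + 2 * Real.pi : ℝ) : ℂ) = (ψ : ℂ) + 2 * Real.pi by push_cast; ring]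
    rw [show Complex.I * k * ((ψ : ℂ) + 2 * Real.pi)
        = Complex.I * k * (ψ : ℂ) + Complex.I * k * ((2:ℂ) * Real.pi) by ring]
    rw [Complex.exp_add, exp_I_int_two_pi, mul_one]
  · -- zero integral
    have hle : (0 : ℝ) ≤ 2 * Real.pi := by positivity
    rw [intervalIntegral.integral_of_le hle]
    have hmeas : ∀ k : ℤ, MeasureTheory.AEStronglyMeasurable
        (fun ψ : ℝ => b k * Complex.exp (Complex.I * k * ψ))
        (MeasureTheory.volume.restrict (Set.Ioc 0 (2 * Real.pi))) := by
      intro k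
      exact (continuous_const.mul (Complex.continuous_exp.comp
        (continuous_const.mul Complex.continuous_ofReal))).aestronglyMeasurable
    have hnn : Summable (fun k : ℤ => ‖b k‖₊) := by
      refine NNReal.summable_coe.mp ?_
      have : Summable (fun k : ℤ => ‖b k‖) :=
        Summable.of_nonneg_of_le (fun k => norm_nonneg _) (fun k => hbc k) hcsummable
      simpa [coe_nnnorm] using this
    have hfin : (∑' k : ℤ, ∫⁻ ψ in Set.Ioc (0:ℝ) (2 * Real.pi),
        ‖b k * Complex.exp (Complex.I * k * ψ)‖₊ ∂MeasureTheory.volume) ≠ ⊤ := by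
      have heq : ∀ k : ℤ, (∫⁻ ψ in Set.Ioc (0:ℝ) (2 * Real.pi),
          ‖b k * Complex.exp (Complex.I * k * ψ)‖₊ ∂MeasureTheory.volume)
          = (‖b k‖₊ : ENNReal) * MeasureTheory.volume (Set.Ioc (0:ℝ) (2 * Real.pi)) := by
        intro k
        have : ∀ ψ : ℝ, (‖b k * Complex.exp (Complex.I * k * ψ)‖₊ : ENNReal)
            = (‖b k‖₊ : ENNReal) := by
          intro ψ
          have h1 : ‖b k * Complex.exp (Complex.I * k * ψ)‖ = ‖b k‖ := by
            rw [norm_mul, abs_exp_I_int_mul, mul_one]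
          congr 1
          ext
          simpa [coe_nnnorm] using h1
        rw [MeasureTheory.lintegral_congr this, MeasureTheory.lintegral_const,
          MeasureTheory.Measure.restrict_apply_univ]
      rw [tsum_congr heq, ENNReal.tsum_mul_right]
      exact ENNReal.mul_ne_top (ENNReal.tsum_coe_ne_top_iff_summable.2 hnn)
        (by rw [Real.volume_Ioc]; exact ENNReal.ofReal_ne_top)
    rw [MeasureTheory.integral_tsum hmeas hfin]
    have hzero : ∀ k : ℤ, (∫ ψ in Set.Ioc (0:ℝ) (2 * Real.pi),
        b k * Complex.exp (Complex.I * k * ψ)) = 0 := by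
      intro k
      rw [← intervalIntegral.integral_of_le hle]
      by_cases hk : k = 0
      · simp [hb, hk]
      · have hkc : (Complex.I * k : ℂ) ≠ 0 := by
          simp [Complex.I_ne_zero, hk]
        rw [intervalIntegral.integral_const_mul]
        have : (∫ ψ in (0:ℝ)..(2 * Real.pi), Complex.exp (Complex.I * k * ψ)) = 0 := by
          have := integral_exp_mul_complex (a := 0) (b := 2 * Real.pi) hkc
          simp only [mul_comm] at this
          rw [show (fun ψ : ℝ => Complex.exp (Complex.I * k * ψ))
              = fun ψ : ℝ => Complex.exp ((Complex.I * k) * ψ) from rfl]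
          rw [integral_exp_mul_complex hkc]
          rw [show ((2 * Real.pi : ℝ) : ℂ) = (2:ℂ) * Real.pi by push_cast; ring]
          rw [exp_I_int_two_pi]
          simp
        rw [this, mul_zero]
    calc (∑' k : ℤ, ∫ ψ in Set.Ioc (0:ℝ) (2 * Real.pi),
          b k * Complex.exp (Complex.I * k * ψ))
        = ∑' _k : ℤ, (0 : ℂ) := tsum_congr hzero
      _ = 0 := tsum_zero
  · -- difference equation
    intro ψ
    have h1 := (hsummable (ψ + 2 * Real.pi * ω)).hasSum
    have h2 := (hsummable ψ).hasSum
    have h3 := h1.sub h2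
    have h4 : (fun k : ℤ => b k * Complex.exp (Complex.I * k * ((ψ + 2 * Real.pi * ω : ℝ) : ℂ))
        - b k * Complex.exp (Complex.I * k * (ψ : ℂ)))
        = fun k : ℤ => a k * Complex.exp (Complex.I * k * (ψ : ℂ)) := by
      funext k
      by_cases hk : k = 0
      · simp [hb, hk, ha0]
      · simp only [hb, if_neg hk]
        have hsplit : Complex.exp (Complex.I * k * ((ψ + 2 * Real.pi * ω : ℝ) : ℂ))
            = Complex.exp (Complex.I * k * (ψ : ℂ))
              * Complex.exp (2 * Real.pi * Complex.I * k * ω) := by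
          rw [← Complex.exp_add]
          congr 1
          push_cast
          ring
        rw [hsplit]
        have hdk := hdne k hk
        field_simp [hd]
        simp only [hd]; ring_nf
    rw [h4] at h3
    exact h3.unique (hrep ψ)
  · -- HasSum representation
    intro ψ
    have heq : (fun k : ℤ =>
        if k = 0 then 0 else
          a k * Complex.exp (Complex.I * (k : ℂ) * (ψ : ℂ)) /
            (Complex.exp (2 * Real.pi * Complex.I * (k : ℂ) * (ω : ℂ)) - 1))
        = fun k : ℤ => b k * Complex.exp (Complex.I * k * (ψ : ℂ)) := by
      funext k
      by_cases hk : k = 0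
      · simp [hb, hk]
      · simp only [hb, if_neg hk]
        rw [mul_div_right_comm]
    rw [heq]
    exact (hsummable ψ).hasSum
  · -- bound
    intro ψ
    have h1 : ‖∑' k : ℤ, b k * Complex.exp (Complex.I * k * ψ)‖
        ≤ ∑' k : ℤ, ‖b k * Complex.exp (Complex.I * k * ψ)‖ :=
      norm_tsum_le_tsum_norm
        (Summable.of_nonneg_of_le (fun k => norm_nonneg _) (fun k => habs_term k ψ) hcsummable)
    refine h1.trans ?_
    have h2 : (∑' k : ℤ, ‖b k * Complex.exp (Complex.I * k * ψ)‖) ≤ ∑' k : ℤ, c k :=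
      Summable.tsum_le_tsum (fun k => habs_term k ψ)
        (Summable.of_nonneg_of_le (fun k => norm_nonneg _) (fun k => habs_term k ψ) hcsummable)
        hcsummable
    refine h2.trans (le_of_eq ?_)
    rw [hcsum.tsum_eq, hK]
    field_simp
    ring
end
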